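/- Let μ ∈ ℝ, σ > 0, t ∈ [0,1), x ∈ ℝ, and let ρ₀ = N(0,1) be the standard Gaussian density and ρ₁(x₁) = ½ N(x₁ | μ, σ²) + ½ N(x₁ | −μ, σ²) be a symmetric two-component Gaussian mixture. Set D(t) = σ² t² + (1−t)², g₊(x,t) = exp(−(x − μ t)²/(2 D(t))), g₋(x,t) = exp(−(x + μ t)²/(2 D(t))), u₊(x,t) = (σ² t x − (1−t)(x − μ))/D(t), and u₋(x,t) = (σ² t x − (1−t)(x + μ))/D(t). Then the explicit flow-matching vector field v(x,t) = [∫ (x₁ − x) ρ₀((x − t x₁)/(1−t)) ρ₁(x₁) dx₁] / [(1−t) ∫ ρ₀((x − t x₁)/(1−t)) ρ₁(x₁) dx₁] equals the weighted average v(x,t) = (g₊(x,t) u₊(x,t) + g₋(x,t) u₋(x,t)) / (g₊(x,t) + g₋(x,t)). -/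

import Mathlib

open MeasureTheory Real

/-- One-dimensional Gaussian density `N(y | μ, σ²)`. -/
noncomputable def gaussDensity (μ σ y : ℝ) : ℝ :=
  (Real.sqrt (2 * Real.pi * σ ^ 2))⁻¹ * Real.exp (-(y - μ) ^ 2 / (2 * σ ^ 2))

lemma aux_integral_id_gauss_zero {b : ℝ} (hb : 0 < b) :
    ∫ y : ℝ, y * Real.exp (-b * y ^ 2) = 0 := by
  have h := integral_neg_eq_self (fun y : ℝ => y * Real.exp (-b * y ^ 2))
    (volume : Measure ℝ)
  simp only [neg_sq, neg_mul] at h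
  rw [integral_neg] at h
  simp only [neg_mul]
  linarith

lemma aux_integral_gauss_shift {b : ℝ} (hb : 0 < b) (m : ℝ) :
    ∫ y : ℝ, Real.exp (-b * (y - m) ^ 2) = Real.sqrt (π / b) := by
  rw [show (∫ y : ℝ, Real.exp (-b * (y - m) ^ 2))
      = ∫ y : ℝ, (fun z => Real.exp (-b * z ^ 2)) (y - m) from rfl,
    integral_sub_right_eq_self (fun z : ℝ => Real.exp (-b * z ^ 2)) m]
  exact integral_gaussian b

lemma aux_integrable_gauss_shift {b : ℝ} (hb : 0 < b) (m : ℝ) :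
    Integrable fun y : ℝ => Real.exp (-b * (y - m) ^ 2) :=
  (integrable_exp_neg_mul_sq hb).comp_sub_right m

lemma aux_integrable_id_gauss_shift {b : ℝ} (hb : 0 < b) (m : ℝ) :
    Integrable fun y : ℝ => y * Real.exp (-b * (y - m) ^ 2) := by
  have h : Integrable fun z : ℝ => (z + m) * Real.exp (-b * z ^ 2) := by
    have := (integrable_mul_exp_neg_mul_sq hb).add
      ((integrable_exp_neg_mul_sq hb).const_mul m)
    simpa [add_mul, Pi.add_def] using this
  have := h.comp_sub_right m
  simpa using this

lemma aux_integral_id_gauss_shift {b : ℝ} (hb : 0 < b) (m : ℝ) :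
    ∫ y : ℝ, y * Real.exp (-b * (y - m) ^ 2) = m * Real.sqrt (π / b) := by
  have h : ∫ y : ℝ, y * Real.exp (-b * (y - m) ^ 2)
      = ∫ y : ℝ, (y + m) * Real.exp (-b * y ^ 2) := by
    have := integral_add_right_eq_self (μ := volume)
      (fun y : ℝ => y * Real.exp (-b * (y - m) ^ 2)) m
    simpa using this.symm
  rw [h]
  have h1 : ∀ y : ℝ, (y + m) * Real.exp (-b * y ^ 2)
      = y * Real.exp (-b * y ^ 2) + m * Real.exp (-b * y ^ 2) := fun y => by ring
  simp_rw [h1]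
  rw [integral_add (integrable_mul_exp_neg_mul_sq hb)
      ((integrable_exp_neg_mul_sq hb).const_mul m),
    aux_integral_id_gauss_zero hb, integral_const_mul, integral_gaussian, zero_add]

/-- Closed form of the explicit flow-matching vector field from the standard
Gaussian to the symmetric two-component Gaussian mixture
`½ N(μ,σ²) + ½ N(−μ,σ²)`: it is the `g₊,g₋`-weighted average of the closed-form
fields `u₊,u₋` to each component. -/
theorem gaussian_mixture_flow_matching_vector_field (μ σ t x : ℝ)
    (hσ : 0 < σ) (ht : t ∈ Set.Ico (0 : ℝ) 1)
    (ρ0 ρ1 : ℝ → ℝ)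
    (hρ0 : ∀ y, ρ0 y = gaussDensity 0 1 y)
    (hρ1 : ∀ y, ρ1 y = (1 / 2) * gaussDensity μ σ y + (1 / 2) * gaussDensity (-μ) σ y)
    (D : ℝ) (hD : D = σ ^ 2 * t ^ 2 + (1 - t) ^ 2)
    (gp gm up um : ℝ)
    (hgp : gp = Real.exp (-(x - μ * t) ^ 2 / (2 * D)))
    (hgm : gm = Real.exp (-(x + μ * t) ^ 2 / (2 * D)))
    (hup : up = (σ ^ 2 * t * x - (1 - t) * (x - μ)) / D)
    (hum : um = (σ ^ 2 * t * x - (1 - t) * (x + μ)) / D) :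
    (∫ x₁ : ℝ, (x₁ - x) * (ρ0 ((x - t * x₁) / (1 - t)) * ρ1 x₁)) /
      ((1 - t) * ∫ x₁ : ℝ, ρ0 ((x - t * x₁) / (1 - t)) * ρ1 x₁) =
    (gp * up + gm * um) / (gp + gm) := by
  obtain ⟨ht0, ht1⟩ := ht
  have hs : (0 : ℝ) < 1 - t := by linarith
  have hs' : (1 : ℝ) - t ≠ 0 := ne_of_gt hs
  have hσ' : σ ≠ 0 := ne_of_gt hσ
  have hDpos : 0 < D := by
    rw [hD]; positivity
  have hD' : D ≠ 0 := ne_of_gt hDpos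
  set b : ℝ := D / (2 * (1 - t) ^ 2 * σ ^ 2) with hb_def
  have hb : 0 < b := by positivity
  set C : ℝ := (Real.sqrt (2 * π * 1 ^ 2))⁻¹ * (Real.sqrt (2 * π * σ ^ 2))⁻¹ with hC_def
  have hCpos : 0 < C := by
    have h1 : (0:ℝ) < 2 * π * 1 ^ 2 := by positivity
    have h2 : (0:ℝ) < 2 * π * σ ^ 2 := by positivity
    positivity
  set mm : ℝ → ℝ := fun c => (t * σ ^ 2 * x + (1 - t) ^ 2 * c) / D with hmm_def
  -- pointwise factorization of the product of densities
  have key : ∀ c y : ℝ, ρ0 ((x - t * y) / (1 - t)) * gaussDensity c σ y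
      = C * (Real.exp (-(x - c * t) ^ 2 / (2 * D)) * Real.exp (-b * (y - mm c) ^ 2)) := by
    intro c y
    have hexp : -((x - t * y) / (1 - t) - 0) ^ 2 / (2 * 1 ^ 2) + -(y - c) ^ 2 / (2 * σ ^ 2)
        = -(x - c * t) ^ 2 / (2 * D) + -b * (y - mm c) ^ 2 := by
      rw [hmm_def, hb_def, hD]
      field_simp
      ring
    have h1 : Real.exp (-((x - t * y) / (1 - t) - 0) ^ 2 / (2 * 1 ^ 2))
          * Real.exp (-(y - c) ^ 2 / (2 * σ ^ 2))
        = Real.exp (-(x - c * t) ^ 2 / (2 * D)) * Real.exp (-b * (y - mm c) ^ 2) := by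
      rw [← Real.exp_add, ← Real.exp_add, hexp]
    rw [hρ0]
    unfold gaussDensity
    rw [hC_def, ← h1]
    ring
  have intF : ∀ c : ℝ, Integrable
      (fun y : ℝ => ρ0 ((x - t * y) / (1 - t)) * gaussDensity c σ y) := by
    intro c
    have : (fun y : ℝ => ρ0 ((x - t * y) / (1 - t)) * gaussDensity c σ y)
        = fun y : ℝ => (C * Real.exp (-(x - c * t) ^ 2 / (2 * D)))
            * Real.exp (-b * (y - mm c) ^ 2) := by
      funext y; rw [key c y]; ring
    rw [this]
    exact (aux_integrable_gauss_shift hb (mm c)).const_mul _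
  have intG : ∀ c : ℝ, Integrable
      (fun y : ℝ => (y - x) * (ρ0 ((x - t * y) / (1 - t)) * gaussDensity c σ y)) := by
    intro c
    have : (fun y : ℝ => (y - x) * (ρ0 ((x - t * y) / (1 - t)) * gaussDensity c σ y))
        = fun y : ℝ => (C * Real.exp (-(x - c * t) ^ 2 / (2 * D)))
              * (y * Real.exp (-b * (y - mm c) ^ 2))
            - (C * Real.exp (-(x - c * t) ^ 2 / (2 * D)) * x)
              * Real.exp (-b * (y - mm c) ^ 2) := by
      funext y; rw [key c y]; ring
    rw [this]
    exact ((aux_integrable_id_gauss_shift hb (mm c)).const_mul _).sub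
      ((aux_integrable_gauss_shift hb (mm c)).const_mul _)
  -- component integrals
  have I : ∀ c : ℝ, (∫ y : ℝ, ρ0 ((x - t * y) / (1 - t)) * gaussDensity c σ y)
      = C * Real.sqrt (π / b) * Real.exp (-(x - c * t) ^ 2 / (2 * D)) := by
    intro c
    simp_rw [key c]
    rw [integral_const_mul, integral_const_mul, aux_integral_gauss_shift hb]
    ring
  have J : ∀ c : ℝ, (∫ y : ℝ, (y - x) * (ρ0 ((x - t * y) / (1 - t)) * gaussDensity c σ y))
      = C * Real.sqrt (π / b) * Real.exp (-(x - c * t) ^ 2 / (2 * D)) * (mm c - x) := by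
    intro c
    have hptw : ∀ y : ℝ,
        (y - x) * (C * (Real.exp (-(x - c * t) ^ 2 / (2 * D))
            * Real.exp (-b * (y - mm c) ^ 2)))
        = (C * Real.exp (-(x - c * t) ^ 2 / (2 * D)))
            * (y * Real.exp (-b * (y - mm c) ^ 2))
          - (C * Real.exp (-(x - c * t) ^ 2 / (2 * D)) * x)
            * Real.exp (-b * (y - mm c) ^ 2) := fun y => by ring
    simp_rw [key c, hptw]
    rw [integral_sub ((aux_integrable_id_gauss_shift hb (mm c)).const_mul _)
        ((aux_integrable_gauss_shift hb (mm c)).const_mul _),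
      integral_const_mul, integral_const_mul,
      aux_integral_id_gauss_shift hb, aux_integral_gauss_shift hb]
    ring
  -- split the mixture
  have hnum : (∫ x₁ : ℝ, (x₁ - x) * (ρ0 ((x - t * x₁) / (1 - t)) * ρ1 x₁))
      = (1 / 2) * (∫ y : ℝ, (y - x) * (ρ0 ((x - t * y) / (1 - t)) * gaussDensity μ σ y))
        + (1 / 2) * (∫ y : ℝ, (y - x) * (ρ0 ((x - t * y) / (1 - t)) * gaussDensity (-μ) σ y)) := by
    have hptw : ∀ y : ℝ, (y - x) * (ρ0 ((x - t * y) / (1 - t)) * ρ1 y)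
        = (1 / 2) * ((y - x) * (ρ0 ((x - t * y) / (1 - t)) * gaussDensity μ σ y))
          + (1 / 2) * ((y - x) * (ρ0 ((x - t * y) / (1 - t)) * gaussDensity (-μ) σ y)) := by
      intro y; rw [hρ1]; ring
    simp_rw [hptw]
    rw [integral_add ((intG μ).const_mul _) ((intG (-μ)).const_mul _),
      integral_const_mul, integral_const_mul]
  have hden : (∫ x₁ : ℝ, ρ0 ((x - t * x₁) / (1 - t)) * ρ1 x₁)
      = (1 / 2) * (∫ y : ℝ, ρ0 ((x - t * y) / (1 - t)) * gaussDensity μ σ y)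
        + (1 / 2) * (∫ y : ℝ, ρ0 ((x - t * y) / (1 - t)) * gaussDensity (-μ) σ y) := by
    have hptw : ∀ y : ℝ, ρ0 ((x - t * y) / (1 - t)) * ρ1 y
        = (1 / 2) * (ρ0 ((x - t * y) / (1 - t)) * gaussDensity μ σ y)
          + (1 / 2) * (ρ0 ((x - t * y) / (1 - t)) * gaussDensity (-μ) σ y) := by
      intro y; rw [hρ1]; ring
    simp_rw [hptw]
    rw [integral_add ((intF μ).const_mul _) ((intF (-μ)).const_mul _),
      integral_const_mul, integral_const_mul]
  -- identify the exponential factors with gp, gm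
  have hEp : Real.exp (-(x - μ * t) ^ 2 / (2 * D)) = gp := by rw [hgp]
  have hEm : Real.exp (-(x - -μ * t) ^ 2 / (2 * D)) = gm := by
    rw [hgm]; congr 2; ring
  -- posterior means
  have hmmp : mm μ - x = (1 - t) * up := by
    rw [hmm_def, hup, hD]; field_simp; ring
  have hmmm : mm (-μ) - x = (1 - t) * um := by
    rw [hmm_def, hum, hD]; field_simp; ring
  set K : ℝ := C * Real.sqrt (π / b) with hK_def
  have hKpos : 0 < K := by
    have : 0 < π / b := by positivity
    have := Real.sqrt_pos.mpr this
    positivity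
  rw [hnum, hden, I, I, J, J, hEp, hEm, hmmp, hmmm]
  have hfinal :
      (1 / 2 * (K * gp * ((1 - t) * up)) + 1 / 2 * (K * gm * ((1 - t) * um)))
        = (K * (1 - t) / 2) * (gp * up + gm * um) := by ring
  have hfinal2 : (1 - t) * (1 / 2 * (K * gp) + 1 / 2 * (K * gm))
      = (K * (1 - t) / 2) * (gp + gm) := by ring
  rw [hfinal, hfinal2, mul_div_mul_left _ _ (by positivity : K * (1 - t) / 2 ≠ 0)]
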